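/- arXiv:2311.16104 — 3 statements merged into one kernel-verified Lean document; each statement's English description precedes it below -/
import Mathlib

section
/- Let μ₁, ν₁ be probability measures on a measurable space X₁ with μ₁(A) ≤ exp(ε₁) · ν₁(A) for every measurable A ⊆ X₁, and let μ₂, ν₂ be probability measures on a measurable space X₂ with μ₂(A) ≤ exp(ε₂) · ν₂(A) for every measurable A ⊆ X₂ (ε₁, ε₂ ≥ 0). Then the product measures satisfy (μ₁ × μ₂)(S) ≤ exp(ε₁ + ε₂) · (ν₁ × ν₂)(S) for every measurable S ⊆ X₁ × X₂. This is the sequential composition theorem of differential privacy for two independent mechanisms. -/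
open MeasureTheory

/-- Sequential composition of differential privacy for two independent mechanisms:
pointwise `e^ε`-domination of probability measures is preserved (with budgets adding)
under products. -/
theorem dp_sequential_composition {X₁ X₂ : Type*} [MeasurableSpace X₁] [MeasurableSpace X₂]
    (μ₁ ν₁ : Measure X₁) (μ₂ ν₂ : Measure X₂)
    [IsProbabilityMeasure μ₁] [IsProbabilityMeasure ν₁]
    [IsProbabilityMeasure μ₂] [IsProbabilityMeasure ν₂]
    (ε₁ ε₂ : ℝ) (hε₁ : 0 ≤ ε₁) (hε₂ : 0 ≤ ε₂)
    (h₁ : ∀ A : Set X₁, MeasurableSet A → μ₁ A ≤ ENNReal.ofReal (Real.exp ε₁) * ν₁ A)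
    (h₂ : ∀ A : Set X₂, MeasurableSet A → μ₂ A ≤ ENNReal.ofReal (Real.exp ε₂) * ν₂ A) :
    ∀ S : Set (X₁ × X₂), MeasurableSet S →
      (μ₁.prod μ₂) S ≤ ENNReal.ofReal (Real.exp (ε₁ + ε₂)) * (ν₁.prod ν₂) S := by
  intro S hS
  set c₁ := ENNReal.ofReal (Real.exp ε₁)
  set c₂ := ENNReal.ofReal (Real.exp ε₂)
  have hμ₁ : μ₁ ≤ c₁ • ν₁ := by
    rw [Measure.le_iff]
    intro A hA
    simpa using h₁ A hA
  have hmeas : Measurable fun x => ν₂ (Prod.mk x ⁻¹' S) :=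
    measurable_measure_prodMk_left hS
  calc (μ₁.prod μ₂) S = ∫⁻ x, μ₂ (Prod.mk x ⁻¹' S) ∂μ₁ := Measure.prod_apply hS
    _ ≤ ∫⁻ x, c₂ * ν₂ (Prod.mk x ⁻¹' S) ∂μ₁ :=
        lintegral_mono fun x => h₂ _ (measurable_prodMk_left hS)
    _ ≤ ∫⁻ x, c₂ * ν₂ (Prod.mk x ⁻¹' S) ∂(c₁ • ν₁) := lintegral_mono' hμ₁ le_rfl
    _ = c₁ * (c₂ * ∫⁻ x, ν₂ (Prod.mk x ⁻¹' S) ∂ν₁) := by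
        rw [lintegral_smul_measure, lintegral_const_mul _ hmeas, smul_eq_mul]
    _ = ENNReal.ofReal (Real.exp (ε₁ + ε₂)) * (ν₁.prod ν₂) S := by
        rw [Measure.prod_apply hS, Real.exp_add,
          ENNReal.ofReal_mul (Real.exp_nonneg _), ← mul_assoc]
end

section
/- Let ε ∈ (0, 1/2], m ≥ 1, and d ∈ [0, 1]. Let b₁, …, b_m be i.i.d. real random variables taking values in {0,1} with P(b_i = 1) = 1/2 + εd/4, and let L be a Laplace(0, 1/(εm)) random variable independent of the b_i. Define the estimator d̃ = (4/ε)·((1/m)·∑_{i=1}^m b_i − 1/2) + L. Then E[d̃] = d and Var(d̃) = 4/(mε²) − d²/m + 2/(m²ε²) ≤ 2(2m + 1)/(m²ε²). That is, Dwork's density estimator is an unbiased estimate of the density d of the sampled sub-stream with mean squared error at most 2(2m+1)/(m²ε²). -/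
open MeasureTheory ProbabilityTheory

/-- The density of the Laplace distribution with location `μ` and scale `b`. -/
noncomputable def laplacePdf (μ b x : ℝ) : ℝ :=
  (1 / (2 * b)) * Real.exp (-|x - μ| / b)

/-- The Laplace distribution with location `μ` and scale `b`, as a measure on ℝ. -/
noncomputable def laplaceMeasure (μ b : ℝ) : Measure ℝ :=
  volume.withDensity fun x => ENNReal.ofReal (laplacePdf μ b x)


section DworkHelpers
open Real Set ENNReal NNReal

lemma lap_meas (c : ℝ) : Measurable (laplacePdf 0 c) := by
  unfold laplacePdf; fun_prop

lemma lap_nonneg {c : ℝ} (hc : 0 < c) (x : ℝ) : 0 ≤ laplacePdf 0 c x := by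
  unfold laplacePdf; positivity

lemma lap_int {c : ℝ} (hc : 0 < c) (n : ℕ) :
    Integrable (fun x : ℝ => |x| ^ n * Real.exp (-|x| / c)) := by
  have key : IntegrableOn (fun x : ℝ => |x| ^ n * Real.exp (-|x| / c)) (Ioi 0) := by
    refine ((integrableOn_rpow_mul_exp_neg_mul_rpow (p := 1) (s := n) (b := 1/c)
      (lt_of_lt_of_le neg_one_lt_zero (Nat.cast_nonneg n)) zero_lt_one (by positivity))).congr_fun (fun x hx => ?_) measurableSet_Ioi
    rw [mem_Ioi] at hx
    beta_reduce
    rw [abs_of_pos hx, Real.rpow_one, Real.rpow_natCast]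
    ring_nf
  have keyIic : IntegrableOn (fun x : ℝ => |x| ^ n * Real.exp (-|x| / c)) (Iic 0) := by
    rw [← Measure.map_neg_eq_self (volume : Measure ℝ)]
    have m : MeasurableEmbedding fun x : ℝ => -x := (Homeomorph.neg ℝ).measurableEmbedding
    rw [m.integrableOn_map_iff]
    simp_rw [Function.comp_def, abs_neg, neg_preimage, neg_Iic, neg_zero]
    exact (integrableOn_Ici_iff_integrableOn_Ioi).mpr key
  rw [← integrableOn_univ, ← Iic_union_Ioi (a := (0:ℝ)), integrableOn_union]
  exact ⟨keyIic, key⟩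

lemma lap_int_pdf {c : ℝ} (hc : 0 < c) (n : ℕ) :
    Integrable (fun x : ℝ => x ^ n * laplacePdf 0 c x) := by
  refine Integrable.mono' (((lap_int hc n).const_mul (1/(2*c)))) ?_ ?_
  · exact ((measurable_id.pow_const n).mul (lap_meas c)).aestronglyMeasurable
  · refine Filter.Eventually.of_forall fun x => ?_
    rw [Real.norm_eq_abs, abs_mul, abs_pow, abs_of_nonneg (lap_nonneg hc x)]
    simp only [laplacePdf, sub_zero]
    exact le_of_eq (by ring)

lemma lap_first {c : ℝ} (hc : 0 < c) : ∫ x : ℝ, x * laplacePdf 0 c x = 0 := by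
  have h1 : ∫ x : ℝ, (fun y => y * laplacePdf 0 c y) (-x) = ∫ x : ℝ, x * laplacePdf 0 c x := by
    have m : MeasurableEmbedding fun x : ℝ => -x := (Homeomorph.neg ℝ).measurableEmbedding
    conv_rhs => rw [← Measure.map_neg_eq_self (volume : Measure ℝ)]
    rw [m.integral_map]
  have h2 : ∀ x : ℝ, (fun y => y * laplacePdf 0 c y) (-x) = -(x * laplacePdf 0 c x) := by
    intro x
    simp only [laplacePdf, sub_zero, abs_neg]
    try ring
  simp_rw [h2] at h1
  rw [integral_neg] at h1
  linarith

lemma lap_sq {c : ℝ} (hc : 0 < c) : ∫ x : ℝ, x ^ 2 * laplacePdf 0 c x = 2 * c ^ 2 := by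
  have h1 : ∀ x : ℝ, x ^ 2 * laplacePdf 0 c x
      = (fun t : ℝ => t ^ 2 * ((1 / (2 * c)) * Real.exp (-t / c))) |x| := by
    intro x
    simp only [laplacePdf, sub_zero, sq_abs]
  have h2 : ∫ x in Ioi (0:ℝ), x ^ (2:ℝ) * Real.exp (-(1/c) * x ^ (1:ℝ))
      = (1/c) ^ (-((2:ℝ) + 1) / 1) * (1 / 1) * Real.Gamma (((2:ℝ) + 1) / 1) :=
    integral_rpow_mul_exp_neg_mul_rpow (by norm_num) (by norm_num) (by positivity)
  have h3 : ∫ x in Ioi (0:ℝ), x ^ 2 * ((1 / (2 * c)) * Real.exp (-x / c)) = c ^ 2 := by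
    have : ∀ x ∈ Ioi (0:ℝ), x ^ 2 * ((1 / (2 * c)) * Real.exp (-x / c))
        = (1 / (2 * c)) * (x ^ (2:ℝ) * Real.exp (-(1/c) * x ^ (1:ℝ))) := by
      intro x hx
      rw [mem_Ioi] at hx
      rw [Real.rpow_one, show ((2:ℝ)) = ((2:ℕ):ℝ) by norm_num, Real.rpow_natCast,
        show -(1/c)*x = -x/c by ring]
      ring
    rw [setIntegral_congr_fun measurableSet_Ioi this, integral_const_mul, h2]
    have hg : Real.Gamma (((2:ℝ) + 1) / 1) = 2 := by
      rw [show ((2:ℝ) + 1) / 1 = (2:ℕ) + 1 by norm_num, Real.Gamma_nat_eq_factorial]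
      norm_num
    have hb : ((1:ℝ)/c) ^ (-((2:ℝ) + 1) / 1) = c ^ (3:ℕ) := by
      rw [show (-((2:ℝ) + 1) / 1) = -(((3:ℕ):ℝ)) by norm_num,
        Real.rpow_neg (by positivity), Real.rpow_natCast]
      rw [one_div, inv_pow, inv_inv]
    rw [hg, hb]
    field_simp
  calc ∫ x : ℝ, x ^ 2 * laplacePdf 0 c x
      = ∫ x : ℝ, (fun t : ℝ => t ^ 2 * ((1 / (2 * c)) * Real.exp (-t / c))) |x| := by
        simp_rw [h1]
    _ = 2 * ∫ x in Ioi (0:ℝ), x ^ 2 * ((1 / (2 * c)) * Real.exp (-x / c)) :=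
        integral_comp_abs (f := fun t : ℝ => t ^ 2 * ((1 / (2 * c)) * Real.exp (-t / c)))
    _ = 2 * c ^ 2 := by rw [h3]

lemma lapM_integral {c : ℝ} (hc : 0 < c) (g : ℝ → ℝ) :
    ∫ x, g x ∂(laplaceMeasure 0 c) = ∫ x, g x * laplacePdf 0 c x := by
  unfold laplaceMeasure
  have hnn : ∀ x, ENNReal.ofReal (laplacePdf 0 c x)
      = ((laplacePdf 0 c x).toNNReal : ENNReal) := fun x => rfl
  simp_rw [hnn]
  rw [integral_withDensity_eq_integral_smul ((lap_meas c).real_toNNReal) g]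
  congr 1
  funext x
  rw [NNReal.smul_def, Real.coe_toNNReal _ (lap_nonneg hc x), smul_eq_mul, mul_comm]

lemma lapM_integrable_pow {c : ℝ} (hc : 0 < c) (n : ℕ) :
    Integrable (fun x : ℝ => x ^ n) (laplaceMeasure 0 c) := by
  unfold laplaceMeasure
  rw [integrable_withDensity_iff ((lap_meas c).ennreal_ofReal)
    (Filter.Eventually.of_forall fun x => ENNReal.ofReal_lt_top)]
  refine (lap_int_pdf hc n).congr (Filter.Eventually.of_forall fun x => ?_)
  simp only []
  rw [ENNReal.toReal_ofReal (lap_nonneg hc x)]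

end DworkHelpers

/-- Dwork's pan-private density estimator
`d̃ = (4/ε)·((1/m)·∑ᵢ bᵢ − 1/2) + L`, with the `bᵢ` i.i.d. `Bernoulli(1/2 + εd/4)` and
`L ~ Laplace(0, 1/(εm))` independent, is an unbiased estimate of `d` with variance
`4/(mε²) − d²/m + 2/(m²ε²) ≤ 2(2m+1)/(m²ε²)`. -/
theorem dwork_density_estimator_moments {Ω : Type*} [MeasureSpace Ω]
    [IsProbabilityMeasure (ℙ : Measure Ω)] (ε : ℝ) (hε0 : 0 < ε) (hε : ε ≤ 1 / 2)
    (m : ℕ) (hm : 1 ≤ m) (d : ℝ) (hd0 : 0 ≤ d) (hd1 : d ≤ 1)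
    (B : Fin m → Ω → ℝ) (hBmeas : ∀ i, Measurable (B i))
    (hBval : ∀ i ω, B i ω = 0 ∨ B i ω = 1)
    (hB1 : ∀ i, ℙ {ω | B i ω = 1} = ENNReal.ofReal (1 / 2 + ε * d / 4))
    (L : Ω → ℝ) (hLmeas : Measurable L)
    (hLlaw : Measure.map L ℙ = laplaceMeasure 0 (1 / (ε * m)))
    (hindep : iIndepFun
      (fun o : Option (Fin m) => o.elim L B) ℙ) :
    (∫ ω, (4 / ε) * ((1 / m) * ∑ i, B i ω - 1 / 2) + L ω ∂ℙ) = d ∧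
    (∫ ω, ((4 / ε) * ((1 / m) * ∑ i, B i ω - 1 / 2) + L ω - d) ^ 2 ∂ℙ) =
      4 / (m * ε ^ 2) - d ^ 2 / m + 2 / ((m : ℝ) ^ 2 * ε ^ 2) ∧
    4 / (m * ε ^ 2) - d ^ 2 / m + 2 / ((m : ℝ) ^ 2 * ε ^ 2) ≤
      2 * (2 * m + 1) / ((m : ℝ) ^ 2 * ε ^ 2) := by
  have hmpos : (0:ℝ) < m := by exact_mod_cast hm
  have hmne : (m:ℝ) ≠ 0 := hmpos.ne'
  have hεne : ε ≠ 0 := hε0.ne'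
  set c : ℝ := 1 / (ε * m) with hcdef
  have hc : 0 < c := by positivity
  set p : ℝ := 1 / 2 + ε * d / 4 with hpdef
  have hp0 : 0 ≤ p := by positivity
  have hp1 : p ≤ 1 := by rw [hpdef]; nlinarith
  -- L moments
  have hLint : Integrable L ℙ := by
    have h := lapM_integrable_pow hc 1
    rw [← hLlaw] at h
    have h2 := (integrable_map_measure
      (measurable_id.pow_const 1).aestronglyMeasurable
      hLmeas.aemeasurable).mp h
    simpa [Function.comp_def] using h2
  have hL2int : Integrable (fun ω => L ω ^ 2) ℙ := by
    have h := lapM_integrable_pow hc 2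
    rw [← hLlaw] at h
    exact (integrable_map_measure
      (measurable_id.pow_const 2).aestronglyMeasurable
      hLmeas.aemeasurable).mp h
  have hEL : ∫ ω, L ω ∂ℙ = 0 := by
    have := integral_map (μ := (ℙ : Measure Ω)) (φ := L) (f := fun x : ℝ => x) hLmeas.aemeasurable measurable_id.aestronglyMeasurable
    rw [hLlaw, lapM_integral hc] at this
    rw [← this, lap_first hc]
  have hEL2 : ∫ ω, L ω ^ 2 ∂ℙ = 2 * c ^ 2 := by
    have := integral_map (μ := (ℙ : Measure Ω)) (φ := L) (f := fun x : ℝ => x ^ 2) hLmeas.aemeasurable (measurable_id.pow_const 2).aestronglyMeasurable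
    rw [hLlaw, lapM_integral hc] at this
    rw [← this, lap_sq hc]
  -- Bernoulli moments
  have hBint : ∀ i, Integrable (B i) ℙ := fun i => by
    refine Integrable.mono' (integrable_const 1) (hBmeas i).aestronglyMeasurable
      (Filter.Eventually.of_forall fun ω => ?_)
    rcases hBval i ω with h | h <;> simp [h]
  have hEB : ∀ i, ∫ ω, B i ω ∂ℙ = p := fun i => by
    have hA : MeasurableSet {ω | B i ω = 1} := hBmeas i (measurableSet_singleton 1)
    have hind : B i = Set.indicator {ω | B i ω = 1} (fun _ => (1:ℝ)) := by
      funext ω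
      rcases hBval i ω with h | h
      · rw [h, Set.indicator_of_notMem (by simp [Set.mem_setOf_eq, h])]
      · rw [h, Set.indicator_of_mem (by simp [Set.mem_setOf_eq, h])]
    rw [hind]
    rw [show Set.indicator {ω | B i ω = 1} (fun _ => (1:ℝ)) =
      Set.indicator {ω | B i ω = 1} (1 : Ω → ℝ) from rfl]
    rw [integral_indicator_one hA, measureReal_def, hB1 i, ENNReal.toReal_ofReal hp0]
  have hfmeas : ∀ o : Option (Fin m),
      Measurable ((fun o : Option (Fin m) => o.elim L B) o) := by
    rintro (_ | i)
    · exact hLmeas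
    · exact hBmeas i
  have hIndBB : ∀ i j, i ≠ j → IndepFun (B i) (B j) ℙ := fun i j h =>
    hindep.indepFun (show (some i : Option (Fin m)) ≠ some j by simpa using h)
  -- sum
  have hSint : Integrable (fun ω => ∑ i, B i ω) ℙ :=
    integrable_finset_sum _ fun i _ => hBint i
  have hES : ∫ ω, ∑ i, B i ω ∂ℙ = m * p := by
    rw [integral_finset_sum _ fun i _ => hBint i]
    simp [hEB, Finset.card_univ, mul_comm]
  have hSL : IndepFun (fun ω => ∑ i, B i ω) L ℙ := by
    have h := hindep.indepFun_finsetSum_of_notMem hfmeas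
      (s := Finset.univ.image Option.some) (i := none) (by simp)
    have hsum : (∑ o ∈ Finset.univ.image Option.some,
        (fun o : Option (Fin m) => o.elim L B) o) = fun ω => ∑ i, B i ω := by
      funext ω
      rw [Finset.sum_apply, Finset.sum_image (fun a _ b _ h => Option.some_injective _ h)]
      rfl
    rwa [hsum] at h
  -- centered variables
  set T : Ω → ℝ := fun ω => ∑ i, (B i ω - p) with hTdef
  have hTsum : ∀ ω, T ω = (∑ i, B i ω) - m * p := fun ω => by
    show (∑ i, (B i ω - p)) = (∑ i, B i ω) - m * p
    rw [Finset.sum_sub_distrib, Finset.sum_const, Finset.card_univ, Fintype.card_fin,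
      nsmul_eq_mul]
  have hTmeas : Measurable T := by
    apply Finset.measurable_sum
    exact fun i _ => (hBmeas i).sub measurable_const
  have hCbd : ∀ i ω, |B i ω - p| ≤ 2 := fun i ω => by
    rcases hBval i ω with h | h <;> rw [h, abs_le] <;> constructor <;> nlinarith
  have hTbd : ∀ ω, |T ω| ≤ 2 * m := fun ω => by
    calc |T ω| ≤ ∑ i, |B i ω - p| := Finset.abs_sum_le_sum_abs _ _
    _ ≤ ∑ _i : Fin m, (2:ℝ) := Finset.sum_le_sum fun i _ => hCbd i ω
    _ = 2 * m := by simp [Finset.card_univ, mul_comm]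
  have hTint : Integrable T ℙ := by
    refine Integrable.mono' (integrable_const (2 * (m:ℝ)))
      hTmeas.aestronglyMeasurable (Filter.Eventually.of_forall fun ω => ?_)
    simpa using hTbd ω
  have hTTint : Integrable (fun ω => T ω * T ω) ℙ := by
    refine Integrable.mono' (integrable_const ((2 * (m:ℝ)) * (2 * m)))
      (hTmeas.mul hTmeas).aestronglyMeasurable (Filter.Eventually.of_forall fun ω => ?_)
    rw [Real.norm_eq_abs, abs_mul]
    exact mul_le_mul (hTbd ω) (hTbd ω) (abs_nonneg _) (by positivity)
  have hTLint : Integrable (fun ω => T ω * L ω) ℙ := by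
    refine Integrable.bdd_mul (c := 2 * m) hLint hTmeas.aestronglyMeasurable (Filter.Eventually.of_forall fun ω => ?_)
    simpa using hTbd ω
  have hIndTL : IndepFun T L ℙ := by
    have h := hSL.comp (φ := fun x : ℝ => x - (m:ℝ) * p) (ψ := id)
      (measurable_id.sub_const _) measurable_id
    have : (fun x : ℝ => x - (m:ℝ) * p) ∘ (fun ω => ∑ i, B i ω) = T := by
      funext ω
      simp [Function.comp, hTsum ω]
    rwa [this] at h
  have hET : ∫ ω, T ω ∂ℙ = 0 := by
    have : ∫ ω, T ω ∂ℙ = ∫ ω, (∑ i, B i ω) - m * p ∂ℙ := by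
      congr 1; funext ω; exact hTsum ω
    rw [this, integral_sub hSint (integrable_const _), hES, integral_const]
    simp
  have hETL : ∫ ω, T ω * L ω ∂ℙ = 0 := by
    have h : (∫ ω, T ω * L ω ∂ℙ) = (∫ ω, T ω ∂ℙ) * ∫ ω, L ω ∂ℙ :=
      hIndTL.integral_fun_mul_eq_mul_integral hTint.aestronglyMeasurable hLint.aestronglyMeasurable
    rw [h, hEL, mul_zero]
  -- E[T^2]
  have hCint : ∀ i j, Integrable (fun ω => (B i ω - p) * (B j ω - p)) ℙ := fun i j => by
    refine Integrable.mono' (integrable_const (2 * 2 : ℝ))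
      (((hBmeas i).sub measurable_const).mul
        ((hBmeas j).sub measurable_const)).aestronglyMeasurable
      (Filter.Eventually.of_forall fun ω => ?_)
    rw [Real.norm_eq_abs, abs_mul]
    exact mul_le_mul (hCbd i ω) (hCbd j ω) (abs_nonneg _) (by norm_num)
  have hterm : ∀ i j, ∫ ω, (B i ω - p) * (B j ω - p) ∂ℙ
      = if i = j then p - p ^ 2 else 0 := fun i j => by
    by_cases h : i = j
    · subst h
      rw [if_pos rfl]
      have hpt : ∀ ω, (B i ω - p) * (B i ω - p) = (1 - 2 * p) * B i ω + p ^ 2 := fun ω => by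
        rcases hBval i ω with h | h <;> rw [h] <;> ring
      have : ∫ ω, (B i ω - p) * (B i ω - p) ∂ℙ
          = ∫ ω, (1 - 2 * p) * B i ω + p ^ 2 ∂ℙ := by
        congr 1; funext ω; exact hpt ω
      rw [this, integral_add ((hBint i).const_mul _) (integrable_const _),
        integral_const_mul, hEB, integral_const]
      simp only [probReal_univ, smul_eq_mul, one_mul]
      ring
    · rw [if_neg h]
      have hind : IndepFun (fun ω => B i ω - p) (fun ω => B j ω - p) ℙ := by
        have h2 := (hIndBB i j h).comp (φ := fun x : ℝ => x - p) (ψ := fun x : ℝ => x - p)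
          (measurable_id.sub_const _) (measurable_id.sub_const _)
        exact h2
      have h2 : (∫ ω, (B i ω - p) * (B j ω - p) ∂ℙ)
          = (∫ ω, B i ω - p ∂ℙ) * ∫ ω, B j ω - p ∂ℙ :=
        hind.integral_fun_mul_eq_mul_integral ((hBint i).sub (integrable_const _)).aestronglyMeasurable
          ((hBint j).sub (integrable_const _)).aestronglyMeasurable
      rw [h2, integral_sub (hBint i) (integrable_const _), hEB, integral_const]
      simp
  have hETT : ∫ ω, T ω * T ω ∂ℙ = m * (p - p ^ 2) := by
    have hexp : ∀ ω, T ω * T ω = ∑ i, ∑ j, (B i ω - p) * (B j ω - p) := fun ω => by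
      rw [hTdef, Finset.sum_mul_sum]
    have : ∫ ω, T ω * T ω ∂ℙ = ∫ ω, ∑ i, ∑ j, (B i ω - p) * (B j ω - p) ∂ℙ := by
      congr 1; funext ω; exact hexp ω
    rw [this, integral_finset_sum _ fun i _ => integrable_finset_sum _ fun j _ => hCint i j]
    have : ∀ i : Fin m, ∫ ω, ∑ j, (B i ω - p) * (B j ω - p) ∂ℙ = p - p ^ 2 := fun i => by
      rw [integral_finset_sum _ fun j _ => hCint i j]
      simp_rw [hterm i]
      rw [Finset.sum_ite_eq]
      simp
    rw [Finset.sum_congr rfl fun i _ => this i]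
    simp [Finset.card_univ, mul_comm]
    ring
  -- mean
  have hmean : (∫ ω, (4 / ε) * ((1 / m) * ∑ i, B i ω - 1 / 2) + L ω ∂ℙ) = d := by
    have h1 : Integrable (fun ω => (4 / ε) * ((1 / (m:ℝ)) * ∑ i, B i ω - 1 / 2)) ℙ :=
      ((hSint.const_mul (1 / (m:ℝ))).sub (integrable_const (1/2))).const_mul (4 / ε)
    rw [integral_add h1 hLint, hEL, add_zero, integral_const_mul,
      integral_sub (hSint.const_mul _) (integrable_const _), integral_const_mul, hES,
      integral_const]
    simp only [probReal_univ, smul_eq_mul, one_mul]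
    rw [hpdef]
    field_simp
    ring
  refine ⟨hmean, ?_, ?_⟩
  · -- variance
    set k : ℝ := 4 / (ε * m) with hkdef
    have hpt : ∀ ω, ((4 / ε) * ((1 / m) * ∑ i, B i ω - 1 / 2) + L ω - d) ^ 2
        = k ^ 2 * (T ω * T ω) + (2 * k) * (T ω * L ω) + L ω ^ 2 := fun ω => by
      have h1 : (4 / ε) * ((1 / m) * ∑ i, B i ω - 1 / 2) + L ω - d = k * T ω + L ω := by
        rw [hTsum ω, hkdef, hpdef]
        field_simp
        ring
      rw [h1]
      ring
    have : (∫ ω, ((4 / ε) * ((1 / m) * ∑ i, B i ω - 1 / 2) + L ω - d) ^ 2 ∂ℙ)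
        = ∫ ω, k ^ 2 * (T ω * T ω) + (2 * k) * (T ω * L ω) + L ω ^ 2 ∂ℙ := by
      congr 1; funext ω; exact hpt ω
    have hint1 : Integrable (fun ω => k ^ 2 * (T ω * T ω) + 2 * k * (T ω * L ω)) ℙ :=
      (hTTint.const_mul _).add (hTLint.const_mul _)
    have e1 : ∫ ω, k ^ 2 * (T ω * T ω) + 2 * k * (T ω * L ω) + L ω ^ 2 ∂ℙ
        = (∫ ω, k ^ 2 * (T ω * T ω) + 2 * k * (T ω * L ω) ∂ℙ) + ∫ ω, L ω ^ 2 ∂ℙ :=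
      integral_add hint1 hL2int
    have e2 : ∫ ω, k ^ 2 * (T ω * T ω) + 2 * k * (T ω * L ω) ∂ℙ
        = (∫ ω, k ^ 2 * (T ω * T ω) ∂ℙ) + ∫ ω, 2 * k * (T ω * L ω) ∂ℙ :=
      integral_add (hTTint.const_mul _) (hTLint.const_mul _)
    have e3 : ∫ ω, k ^ 2 * (T ω * T ω) ∂ℙ = k ^ 2 * ∫ ω, T ω * T ω ∂ℙ :=
      integral_const_mul _ _
    have e4 : ∫ ω, 2 * k * (T ω * L ω) ∂ℙ = 2 * k * ∫ ω, T ω * L ω ∂ℙ :=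
      integral_const_mul _ _
    rw [this, e1, e2, e3, e4, hETT, hETL, hEL2, mul_zero, add_zero]
    rw [hkdef, hcdef, hpdef]
    field_simp
    ring
  · have key : 4 / (m * ε ^ 2) + 2 / ((m:ℝ) ^ 2 * ε ^ 2)
        = 2 * (2 * m + 1) / ((m:ℝ) ^ 2 * ε ^ 2) := by
      field_simp
      ring
    have hd2 : 0 ≤ d ^ 2 / m := by positivity
    linarith
end

section
/- Let ε ∈ (0, 1/2], m ≥ 1, and d ∈ [0, 1], and set t = tanh(ε/2). Let b₁, …, b_m be i.i.d. real random variables taking values in {0,1} with P(b_i = 1) = (1/2)(1 − t) + t·d, and let L be a Laplace(0, 1/(εm)) random variable independent of the b_i. Define the estimator d̃ = (1/t)·((1/m)·∑_{i=1}^m b_i − 1/2 + t/2) + L. Then E[d̃] = d and Var(d̃) = (1/(4m))·(1/t² − 1) + d(1 − d)/m + 2/(m²ε²) ≤ 1/(4m·tanh²(ε/2)) + 2/(m²ε²). That is, the Optimal Bernoulli density estimator is an unbiased estimate of the density d with the stated mean-squared-error bound. -/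
open MeasureTheory ProbabilityTheory

open Set
open scoped NNReal ENNReal

lemma myIntegrable_comp_abs {f : ℝ → ℝ} (hf : IntegrableOn (fun x => f |x|) (Set.Ioi 0)) :
    Integrable (fun x => f |x|) := by
  have int_Iic : IntegrableOn (fun x ↦ f |x|) (Set.Iic 0) := by
    rw [← Measure.map_neg_eq_self (volume : Measure ℝ)]
    have m : MeasurableEmbedding fun x : ℝ => -x := (Homeomorph.neg ℝ).measurableEmbedding
    rw [m.integrableOn_map_iff]
    simp_rw [Function.comp_def, abs_neg, Set.neg_preimage, Set.neg_Iic, neg_zero]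
    exact Iff.mpr integrableOn_Ici_iff_integrableOn_Ioi hf
  have h := int_Iic.union hf
  rwa [Set.Iic_union_Ioi, integrableOn_univ] at h

lemma myIntOn_pow_exp (n : ℕ) {r : ℝ} (hr : 0 < r) :
    IntegrableOn (fun x : ℝ => x ^ n * Real.exp (-(r * x))) (Set.Ioi 0) := by
  have h : IntegrableOn (fun x : ℝ => Real.exp (-x) * x ^ (n : ℝ)) (Set.Ioi 0) := by
    simpa using Real.GammaIntegral_convergent (s := (n : ℝ) + 1) (by positivity)
  have h2 : IntegrableOn (fun x : ℝ => Real.exp (-(r * x)) * (r * x) ^ (n : ℝ))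
      (Set.Ioi 0) :=
    (integrableOn_Ioi_comp_mul_left_iff (fun x : ℝ => Real.exp (-x) * x ^ (n : ℝ)) 0 hr).mpr
      (by simpa using h)
  refine MeasureTheory.IntegrableOn.congr_fun (h2.const_mul ((r : ℝ) ^ n)⁻¹)
    (fun x hx => ?_) measurableSet_Ioi
  have hx0 : (0:ℝ) < x := hx
  rw [Real.rpow_natCast, mul_pow]
  field_simp

lemma myIntegrable_abs_pow_exp (n : ℕ) {r : ℝ} (hr : 0 < r) :
    Integrable (fun x : ℝ => |x| ^ n * Real.exp (-(r * |x|))) := by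
  apply myIntegrable_comp_abs (f := fun u => u ^ n * Real.exp (-(r * u)))
  exact (myIntOn_pow_exp n hr).congr_fun (fun x hx => by rw [abs_of_pos hx]) measurableSet_Ioi

lemma myIntegral_pow_exp (n : ℕ) {r : ℝ} (hr : 0 < r) :
    ∫ x in Set.Ioi (0:ℝ), x ^ n * Real.exp (-(r * x)) = (Nat.factorial n : ℝ) / r ^ (n + 1) := by
  have h := Real.integral_rpow_mul_exp_neg_mul_Ioi (a := (n : ℝ) + 1) (r := r)
    (by positivity) hr
  simp only [add_sub_cancel_right] at h
  rw [show (∫ x in Set.Ioi (0:ℝ), x ^ n * Real.exp (-(r * x)))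
      = ∫ x in Set.Ioi (0:ℝ), x ^ (n : ℝ) * Real.exp (-(r * x)) by
    refine setIntegral_congr_fun measurableSet_Ioi (fun x hx => ?_)
    rw [Real.rpow_natCast], h, Real.Gamma_nat_eq_factorial,
    show ((n:ℝ)+1) = ((n+1 : ℕ):ℝ) by push_cast; ring, Real.rpow_natCast,
    one_div, inv_pow, inv_mul_eq_div]

lemma laplacePdf_nonneg {b : ℝ} (hb : 0 < b) (x : ℝ) : 0 ≤ laplacePdf 0 b x := by
  unfold laplacePdf; positivity

lemma laplacePdf_continuous {b : ℝ} : Continuous (laplacePdf 0 b) := by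
  unfold laplacePdf
  exact continuous_const.mul (Real.continuous_exp.comp
    (((continuous_id.sub continuous_const).abs.neg).div_const b))

lemma laplacePdf_eq {b : ℝ} (x : ℝ) :
    laplacePdf 0 b x = 1 / (2 * b) * Real.exp (-(b⁻¹ * |x|)) := by
  unfold laplacePdf; rw [sub_zero]; congr 2; ring

lemma myLaplace_integrable_mul_pow {b : ℝ} (hb : 0 < b) (n : ℕ) :
    Integrable (fun x => laplacePdf 0 b x * x ^ n) := by
  refine ((myIntegrable_abs_pow_exp n (inv_pos.2 hb)).const_mul (1/(2*b))).mono'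
    ((laplacePdf_continuous.mul (continuous_pow n)).aestronglyMeasurable)
    (ae_of_all _ fun x => ?_)
  rw [Real.norm_eq_abs, abs_mul, abs_of_nonneg (laplacePdf_nonneg hb x), laplacePdf_eq, abs_pow]
  exact le_of_eq (by ring)

lemma myLaplace_I2val {b : ℝ} (hb : 0 < b) :
    ∫ x, laplacePdf 0 b x * x ^ 2 = 2 * b ^ 2 := by
  have hfun : (fun x : ℝ => laplacePdf 0 b x * x ^ 2)
      = fun x => (fun u : ℝ => 1/(2*b) * (u ^ 2 * Real.exp (-(b⁻¹ * u)))) |x| := by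
    funext x
    rw [laplacePdf_eq]
    simp only [sq_abs]
    ring
  rw [hfun, integral_comp_abs (f := fun u => 1/(2*b) * (u ^ 2 * Real.exp (-(b⁻¹ * u)))),
    integral_const_mul, myIntegral_pow_exp 2 (inv_pos.2 hb)]
  simp [Nat.factorial]
  field_simp

lemma myLaplace_I1val {b : ℝ} (hb : 0 < b) :
    ∫ x, laplacePdf 0 b x * x = 0 := by
  have h := integral_neg_eq_self (fun x => laplacePdf 0 b x * x) (volume : Measure ℝ)
  have heq : ∀ x : ℝ, laplacePdf 0 b (-x) * (-x) = -(laplacePdf 0 b x * x) := by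
    intro x; rw [laplacePdf_eq, laplacePdf_eq, abs_neg]; ring
  simp_rw [heq, integral_neg] at h
  linarith

lemma laplace_moment {b : ℝ} (hb : 0 < b) {Ω : Type*} [MeasureSpace Ω] {L : Ω → ℝ}
    (hLmeas : Measurable L) (hLlaw : Measure.map L ℙ = laplaceMeasure 0 b)
    {g : ℝ → ℝ} (hg : Measurable g) (hint : Integrable (fun x => laplacePdf 0 b x * g x)) :
    Integrable (fun ω => g (L ω)) ℙ ∧
      (∫ ω, g (L ω) ∂ℙ) = ∫ x, laplacePdf 0 b x * g x := by
  have hmeasNN : Measurable fun x => (laplacePdf 0 b x).toNNReal :=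
    (laplacePdf_continuous.measurable).real_toNNReal
  have hlm : laplaceMeasure 0 b
      = volume.withDensity fun x => ((laplacePdf 0 b x).toNNReal : ℝ≥0∞) := rfl
  have hsmul : (fun x => ((laplacePdf 0 b x).toNNReal : ℝ≥0) • g x)
      = fun x => laplacePdf 0 b x * g x := by
    funext x; rw [NNReal.smul_def, smul_eq_mul, Real.coe_toNNReal _ (laplacePdf_nonneg hb x)]
  have hint2 : Integrable g (Measure.map L ℙ) := by
    rw [hLlaw, hlm, integrable_withDensity_iff_integrable_smul hmeasNN, hsmul]
    exact hint
  refine ⟨(integrable_map_measure hg.aestronglyMeasurable hLmeas.aemeasurable).1 hint2, ?_⟩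
  calc (∫ ω, g (L ω) ∂ℙ) = ∫ y, g y ∂(Measure.map L ℙ) :=
        (integral_map hLmeas.aemeasurable hg.aestronglyMeasurable).symm
    _ = ∫ x, laplacePdf 0 b x * g x := by
        rw [hLlaw, hlm, integral_withDensity_eq_integral_smul hmeasNN, hsmul]

/-- The Optimal Bernoulli density estimator
`d̃ = (1/t)·((1/m)·∑ᵢ bᵢ − 1/2 + t/2) + L`, with `t = tanh(ε/2)`, the `bᵢ` i.i.d.
`Bernoulli((1/2)(1 − t) + t·d)`, and `L ~ Laplace(0, 1/(εm))` independent, is an unbiased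
estimate of `d` with variance
`(1/(4m))·(1/t² − 1) + d(1 − d)/m + 2/(m²ε²) ≤ 1/(4m·tanh²(ε/2)) + 2/(m²ε²)`. -/
theorem optimal_bernoulli_density_estimator_moments {Ω : Type*} [MeasureSpace Ω]
    [IsProbabilityMeasure (ℙ : Measure Ω)] (ε : ℝ) (hε0 : 0 < ε) (hε : ε ≤ 1 / 2)
    (m : ℕ) (hm : 1 ≤ m) (d : ℝ) (hd0 : 0 ≤ d) (hd1 : d ≤ 1)
    (t : ℝ) (ht : t = Real.tanh (ε / 2))
    (B : Fin m → Ω → ℝ) (hBmeas : ∀ i, Measurable (B i))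
    (hBval : ∀ i ω, B i ω = 0 ∨ B i ω = 1)
    (hB1 : ∀ i, ℙ {ω | B i ω = 1} = ENNReal.ofReal ((1 / 2) * (1 - t) + t * d))
    (L : Ω → ℝ) (hLmeas : Measurable L)
    (hLlaw : Measure.map L ℙ = laplaceMeasure 0 (1 / (ε * m)))
    (hindep : iIndepFun
      (fun o : Option (Fin m) => o.elim L B) ℙ) :
    (∫ ω, (1 / t) * ((1 / m) * ∑ i, B i ω - 1 / 2 + t / 2) + L ω ∂ℙ) = d ∧
    (∫ ω, ((1 / t) * ((1 / m) * ∑ i, B i ω - 1 / 2 + t / 2) + L ω - d) ^ 2 ∂ℙ) =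
      (1 / (4 * m)) * (1 / t ^ 2 - 1) + d * (1 - d) / m + 2 / ((m : ℝ) ^ 2 * ε ^ 2) ∧
    (1 / (4 * m)) * (1 / t ^ 2 - 1) + d * (1 - d) / m + 2 / ((m : ℝ) ^ 2 * ε ^ 2) ≤
      1 / (4 * m * Real.tanh (ε / 2) ^ 2) + 2 / ((m : ℝ) ^ 2 * ε ^ 2) := by
  have hmpos : (0:ℝ) < m := by exact_mod_cast hm
  have hm0 : (m:ℝ) ≠ 0 := hmpos.ne'
  have ht0 : 0 < t := by
    rw [ht, Real.tanh_eq_sinh_div_cosh]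
    exact div_pos (Real.sinh_pos_iff.mpr (by linarith)) (Real.cosh_pos _)
  have htne : t ≠ 0 := ht0.ne'
  set b : ℝ := 1 / (ε * m) with hbdef
  have hb : 0 < b := div_pos one_pos (mul_pos hε0 hmpos)
  set p : ℝ := 1 / 2 * (1 - t) + t * d with hp
  have ht1 : t < 1 := by
    rw [ht, Real.tanh_eq_sinh_div_cosh, div_lt_one (Real.cosh_pos _)]
    have h1 := Real.cosh_sub_sinh (ε / 2)
    nlinarith [Real.exp_pos (-(ε / 2))]
  have hp0 : 0 ≤ p := by rw [hp]; nlinarith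
  -- Laplace moments
  have hL1 := laplace_moment hb hLmeas hLlaw (g := fun y => y) measurable_id
    (by simpa [pow_one] using myLaplace_integrable_mul_pow hb 1)
  have hL2 := laplace_moment hb hLmeas hLlaw (g := fun y => y ^ 2)
    (measurable_id.pow_const 2) (myLaplace_integrable_mul_pow hb 2)
  have hintL : Integrable L ℙ := hL1.1
  have hintL2 : Integrable (fun ω => L ω ^ 2) ℙ := hL2.1
  have hEL : (∫ ω, L ω ∂ℙ) = 0 := by
    have := hL1.2
    simpa [myLaplace_I1val hb] using this
  have hEL2 : (∫ ω, L ω ^ 2 ∂ℙ) = 2 * b ^ 2 := by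
    have := hL2.2
    simpa [myLaplace_I2val hb] using this
  -- Bernoulli moments
  have hintB : ∀ i, Integrable (B i) ℙ := fun i => by
    refine (integrable_const (1:ℝ)).mono' ((hBmeas i).aestronglyMeasurable)
      (ae_of_all _ fun ω => ?_)
    rcases hBval i ω with h | h <;> simp [h]
  have hEB : ∀ i, (∫ ω, B i ω ∂ℙ) = p := by
    intro i
    have hs : MeasurableSet {ω | B i ω = 1} := by
      have h : {ω | B i ω = 1} = B i ⁻¹' {1} := by ext ω; simp
      rw [h]; exact (hBmeas i) (measurableSet_singleton 1)
    have hind : (fun ω => B i ω) = Set.indicator {ω | B i ω = 1} (fun _ => (1:ℝ)) := by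
      funext ω; rcases hBval i ω with h | h <;> simp [Set.indicator_apply, h]
    rw [hind, integral_indicator_const (1:ℝ) hs, Measure.real, hB1 i, smul_eq_mul, mul_one,
      ENNReal.toReal_ofReal hp0]
  have hintBB : ∀ i j, Integrable (fun ω => B i ω * B j ω) ℙ := fun i j => by
    refine (integrable_const (1:ℝ)).mono' (((hBmeas i).mul (hBmeas j)).aestronglyMeasurable)
      (ae_of_all _ fun ω => ?_)
    rcases hBval i ω with h | h <;> rcases hBval j ω with h' | h' <;> simp [h, h']
  have hEBB : ∀ i j, (∫ ω, B i ω * B j ω ∂ℙ) = if i = j then p else p ^ 2 := by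
    intro i j
    by_cases hij : i = j
    · subst hij
      rw [if_pos rfl]
      have h : (fun ω => B i ω * B i ω) = fun ω => B i ω := funext fun ω => by
        rcases hBval i ω with h | h <;> rw [h] <;> ring
      rw [show (∫ ω, B i ω * B i ω ∂ℙ) = ∫ ω, B i ω ∂ℙ by rw [h]]
      exact hEB i
    · rw [if_neg hij]
      have hI : IndepFun (B i) (B j) ℙ :=
        hindep.indepFun (show (some i : Option (Fin m)) ≠ some j by simpa using hij)
      have h := hI.integral_fun_mul_eq_mul_integral (hintB i).aestronglyMeasurable (hintB j).aestronglyMeasurable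
      calc (∫ ω, B i ω * B j ω ∂ℙ) = (∫ ω, B i ω ∂ℙ) * ∫ ω, B j ω ∂ℙ := h
        _ = p ^ 2 := by rw [hEB i, hEB j]; ring
  have hIndepBL : ∀ i, IndepFun (B i) L ℙ := fun i =>
    hindep.indepFun (show (some i : Option (Fin m)) ≠ none by simp)
  have hintBL : ∀ i, Integrable (fun ω => B i ω * L ω) ℙ := fun i =>
    (hIndepBL i).integrable_mul (hintB i) hintL
  have hEBL : ∀ i, (∫ ω, B i ω * L ω ∂ℙ) = 0 := by
    intro i
    have h := (hIndepBL i).integral_fun_mul_eq_mul_integral (hintB i).aestronglyMeasurable hintL.aestronglyMeasurable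
    calc (∫ ω, B i ω * L ω ∂ℙ) = (∫ ω, B i ω ∂ℙ) * ∫ ω, L ω ∂ℙ := h
      _ = 0 := by rw [hEL, mul_zero]
  have hintS : Integrable (fun ω => ∑ i, B i ω) ℙ :=
    integrable_finset_sum _ fun i _ => hintB i
  have hS : (∫ ω, ∑ i, B i ω ∂ℙ) = m * p := by
    rw [integral_finset_sum _ fun i _ => hintB i]
    simp only [hEB]
    rw [Finset.sum_const, Finset.card_univ, Fintype.card_fin, nsmul_eq_mul]
  refine ⟨?_, ?_, ?_⟩
  · -- expectation
    rw [show (∫ ω, (1 / t) * ((1 / m) * ∑ i, B i ω - 1 / 2 + t / 2) + L ω ∂ℙ)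
        = ∫ ω, (1 / (t * m)) * (∑ i, B i ω) + ((t - 1) / (2 * t) + L ω) ∂ℙ from
      integral_congr_ae (ae_of_all _ fun ω => by push_cast; ring)]
    have iA : Integrable (fun ω => (t - 1) / (2 * t) + L ω) ℙ := by
      exact (integrable_const _).add hintL
    rw [integral_add (hintS.const_mul _) iA,
      integral_const_mul, integral_add (integrable_const _) hintL, integral_const, hS, hEL]
    simp only [probReal_univ, measure_univ, ENNReal.toReal_one, one_smul, add_zero]
    rw [hp]
    field_simp
    ring
  · -- variance
    have hintSS : Integrable (fun ω => ∑ i, ∑ j, B i ω * B j ω) ℙ :=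
      integrable_finset_sum _ fun i _ => integrable_finset_sum _ fun j _ => hintBB i j
    have hintSL : Integrable (fun ω => ∑ i, B i ω * L ω) ℙ :=
      integrable_finset_sum _ fun i _ => hintBL i
    have hSS : (∫ ω, ∑ i, ∑ j, B i ω * B j ω ∂ℙ)
        = m * p + ((m:ℝ) ^ 2 - m) * p ^ 2 := by
      rw [integral_finset_sum _ fun i _ => integrable_finset_sum _ fun j _ => hintBB i j]
      have h1 : ∀ i : Fin m, (∫ ω, ∑ j, B i ω * B j ω ∂ℙ)
          = ∑ j, ∫ ω, B i ω * B j ω ∂ℙ := fun i =>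
        integral_finset_sum _ fun j _ => hintBB i j
      simp_rw [h1, hEBB]
      have h2 : ∀ i : Fin m, (∑ j, if i = j then p else p ^ 2)
          = p + ((m:ℝ) - 1) * p ^ 2 := by
        intro i
        rw [show (∑ j, if i = j then p else p ^ 2)
            = ∑ j : Fin m, (p ^ 2 + if i = j then p - p ^ 2 else 0) from
          Finset.sum_congr rfl fun j _ => by by_cases h : i = j <;> simp [h] <;> ring]
        rw [Finset.sum_add_distrib, Finset.sum_const, Finset.sum_ite_eq]
        simp [Finset.card_univ]
        ring
      simp_rw [h2]
      rw [Finset.sum_const, Finset.card_univ, Fintype.card_fin, nsmul_eq_mul]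
      ring
    have hSL : (∫ ω, ∑ i, B i ω * L ω ∂ℙ) = 0 := by
      rw [integral_finset_sum _ fun i _ => hintBL i]
      simp [hEBL]
    rw [show (∫ ω, ((1 / t) * ((1 / m) * ∑ i, B i ω - 1 / 2 + t / 2) + L ω - d) ^ 2 ∂ℙ)
        = ∫ ω, ((1 / (t * m)) ^ 2 * (∑ i, ∑ j, B i ω * B j ω)
            + (2 * (1 / (t * m)) * ((t - 1) / (2 * t) - d)) * (∑ i, B i ω)
            + (2 * (1 / (t * m))) * (∑ i, B i ω * L ω)
            + ((2 * ((t - 1) / (2 * t) - d)) * L ω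
            + (L ω ^ 2 + ((t - 1) / (2 * t) - d) ^ 2))) ∂ℙ from
      integral_congr_ae (ae_of_all _ fun ω => by
        dsimp only
        have e1 : (∑ i, ∑ j, B i ω * B j ω) = (∑ i, B i ω) * (∑ j, B j ω) :=
          (Finset.sum_mul_sum _ _ _ _).symm
        have e2 : (∑ i, B i ω * L ω) = (∑ i, B i ω) * L ω := by
          rw [← Finset.sum_mul]
        rw [e1, e2]; push_cast; ring)]
    have i1 : Integrable (fun ω => (1 / (t * (m:ℝ))) ^ 2 * ∑ i, ∑ j, B i ω * B j ω) ℙ :=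
      hintSS.const_mul _
    have i2 : Integrable (fun ω =>
        (2 * (1 / (t * (m:ℝ))) * ((t - 1) / (2 * t) - d)) * ∑ i, B i ω) ℙ :=
      hintS.const_mul _
    have i3 : Integrable (fun ω => (2 * (1 / (t * (m:ℝ)))) * ∑ i, B i ω * L ω) ℙ :=
      hintSL.const_mul _
    have i12 : Integrable (fun ω => (1 / (t * (m:ℝ))) ^ 2 * ∑ i, ∑ j, B i ω * B j ω
        + (2 * (1 / (t * (m:ℝ))) * ((t - 1) / (2 * t) - d)) * ∑ i, B i ω) ℙ := by
      exact i1.add i2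
    have i123 : Integrable (fun ω => ((1 / (t * (m:ℝ))) ^ 2 * ∑ i, ∑ j, B i ω * B j ω
        + (2 * (1 / (t * (m:ℝ))) * ((t - 1) / (2 * t) - d)) * ∑ i, B i ω)
        + (2 * (1 / (t * (m:ℝ)))) * ∑ i, B i ω * L ω) ℙ := by
      exact i12.add i3
    have i6 : Integrable (fun ω => L ω ^ 2 + ((t - 1) / (2 * t) - d) ^ 2) ℙ := by
      exact hintL2.add (integrable_const _)
    have i56 : Integrable (fun ω => (2 * ((t - 1) / (2 * t) - d)) * L ω
        + (L ω ^ 2 + ((t - 1) / (2 * t) - d) ^ 2)) ℙ := by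
      exact (hintL.const_mul _).add i6
    rw [integral_add i123 i56,
      integral_add i12 i3,
      integral_add i1 i2,
      integral_add (hintL.const_mul _) i6,
      integral_add hintL2 (integrable_const _),
      integral_const_mul, integral_const_mul, integral_const_mul, integral_const_mul,
      hSS, hS, hSL, hEL, hEL2, integral_const]
    simp only [probReal_univ, measure_univ, ENNReal.toReal_one, one_smul]
    rw [hp, hbdef]
    field_simp
    ring
  · -- inequality
    have h14 : d * (1 - d) ≤ 1 / 4 := by nlinarith [sq_nonneg (d - 1 / 2)]
    rw [← ht]
    have heq : 1 / (4 * (m:ℝ) * t ^ 2) = 1 / (4 * m) * (1 / t ^ 2 - 1) + 1 / (4 * m) := by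
      field_simp
      ring
    rw [heq]
    have hle : d * (1 - d) / m ≤ 1 / (4 * m) := by
      rw [show (1:ℝ) / (4 * m) = (1 / 4) / m by ring]
      gcongr
    linarith
end
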